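/- Let n ∈ (0,2), η > 0, ν = (n-2)/2, and define Y⁻(x) = ∫₀^∞ z^{η-1} S⁻_ν(xz) e^{-(z²+x²)/2} dz where S⁻_ν(u) = u^{-ν} I_ν(u). Then for every x > 0, x·Y⁻_{ν+1,η+2}(x) := x ∫₀^∞ z^{η+1} S⁻_{ν+1}(xz) e^{-(z²+x²)/2} dz equals x Y⁻(x) + (η - n) x^{1-n} e^{-x²/2} ∫₀^x Y⁻_a(a) a^{n-1} e^{a²/2} da, where Y⁻_a(a) denotes Y⁻ evaluated at a. -/

import Mathlib

open Real MeasureTheory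

noncomputable def besselI (ν x : ℝ) : ℝ :=
  (x / 2) ^ ν * ∑' k : ℕ, (x ^ 2 / 4) ^ k / ((Nat.factorial k : ℝ) * Real.Gamma (ν + (k : ℝ) + 1))

noncomputable def Sminus (ν x : ℝ) : ℝ := x ^ (-ν) * besselI ν x

noncomputable def Ym (ν η x : ℝ) : ℝ :=
  ∫ z in Set.Ioi (0:ℝ), z ^ (η - 1) * Sminus ν (x * z) * Real.exp (-(z ^ 2 + x ^ 2) / 2)

noncomputable def d (ν η : ℝ) (k : ℕ) : ℝ :=
  2 ^ (-ν) * 2 ^ ((η + 2*(k:ℝ) - 2)/2) * Real.Gamma ((η + 2*(k:ℝ))/2) /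
    (4^k * (Nat.factorial k : ℝ) * Real.Gamma (ν + (k:ℝ) + 1))

lemma d_pos {ν η : ℝ} (hν : -1 < ν) (hη : 0 < η) (k : ℕ) : 0 < d ν η k := by
  have h1 : 0 < Real.Gamma ((η + 2*(k:ℝ))/2) :=
    Real.Gamma_pos_of_pos (by positivity)
  have h2 : 0 < Real.Gamma (ν + (k:ℝ) + 1) :=
    Real.Gamma_pos_of_pos (by have : (0:ℝ) ≤ k := Nat.cast_nonneg k; linarith)
  unfold d
  positivity

lemma d_succ {ν η : ℝ} (hν : -1 < ν) (hη : 0 < η) (k : ℕ) :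
    d ν η (k+1) = d ν η k * ((η + 2*(k:ℝ)) / (4 * ((k:ℝ)+1) * (ν + (k:ℝ) + 1))) := by
  have hk : (0:ℝ) ≤ k := Nat.cast_nonneg k
  have hG1 : Real.Gamma ((η + 2*((k:ℝ)+1))/2) = ((η + 2*(k:ℝ))/2) * Real.Gamma ((η + 2*(k:ℝ))/2) := by
    rw [show (η + 2*((k:ℝ)+1))/2 = (η + 2*(k:ℝ))/2 + 1 by ring,
      Real.Gamma_add_one (by positivity)]
  have hG2 : Real.Gamma (ν + ((k:ℝ)+1) + 1) = (ν + (k:ℝ) + 1) * Real.Gamma (ν + (k:ℝ) + 1) := by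
    rw [show ν + ((k:ℝ)+1) + 1 = (ν + (k:ℝ) + 1) + 1 by ring,
      Real.Gamma_add_one (by intro h; nlinarith)]
  have hr : (2:ℝ) ^ ((η + 2*((k:ℝ)+1) - 2)/2) = 2 ^ ((η + 2*(k:ℝ) - 2)/2) * 2 := by
    rw [show (η + 2*((k:ℝ)+1) - 2)/2 = (η + 2*(k:ℝ) - 2)/2 + 1 by ring,
      Real.rpow_add (by norm_num), Real.rpow_one]
  have hGp1 : 0 < Real.Gamma ((η + 2*(k:ℝ))/2) := Real.Gamma_pos_of_pos (by positivity)
  have hGp2 : 0 < Real.Gamma (ν + (k:ℝ) + 1) := Real.Gamma_pos_of_pos (by linarith)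
  unfold d
  push_cast [Nat.factorial_succ, pow_succ]
  have hνk : (0:ℝ) < ν + (k:ℝ) + 1 := by linarith
  have hkf : (0:ℝ) < (Nat.factorial k : ℝ) := by positivity
  rw [hG1, hG2, hr, div_mul_div_comm, div_eq_div_iff (by positivity) (by positivity)]
  ring

lemma moment {q : ℝ} (hq : -1 < q) :
    ∫ z in Set.Ioi (0:ℝ), z ^ q * Real.exp (-z^2/2) = 2 ^ ((q-1)/2) * Real.Gamma ((q+1)/2) := by
  have h := integral_rpow_mul_exp_neg_mul_rpow (p := 2) (q := q) (b := 1/2)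
    (by norm_num) hq (by norm_num)
  have h2 : ∀ z ∈ Set.Ioi (0:ℝ), z ^ q * Real.exp (-(1/2) * z ^ (2:ℝ)) = z ^ q * Real.exp (-z^2/2) := by
    intro z hz
    rw [show ((2:ℝ)) = ((2:ℕ):ℝ) by norm_num, Real.rpow_natCast]
    norm_num [neg_div]
    exact Or.inl (by ring)
  rw [setIntegral_congr_fun measurableSet_Ioi h2] at h
  rw [h]
  rw [show ((1:ℝ)/2) = 2⁻¹ by norm_num, Real.inv_rpow (by norm_num),
    ← Real.rpow_neg ((by norm_num : (0:ℝ) ≤ 2)),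
    show -(-(q+1)/2) = (q+1)/2 by ring,
    show (2⁻¹ : ℝ) = 2 ^ (-1 : ℝ) by rw [Real.rpow_neg_one],
    ← Real.rpow_add (by norm_num), show (q+1)/2 + (-1:ℝ) = (q-1)/2 by ring]

lemma Sminus_eq {ν u : ℝ} (hu : 0 < u) :
    Sminus ν u = ∑' k : ℕ, 2 ^ (-ν) *
      ((u^2/4)^k / ((Nat.factorial k : ℝ) * Real.Gamma (ν + (k:ℝ) + 1))) := by
  rw [tsum_mul_left]
  unfold Sminus besselI
  rw [Real.div_rpow hu.le (by norm_num), Real.rpow_neg hu.le, Real.rpow_neg (by norm_num : (0:ℝ) ≤ 2)]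
  have h : u ^ ν ≠ 0 := ne_of_gt (Real.rpow_pos_of_pos hu ν)
  field_simp

lemma summable_d {ν η : ℝ} (hν : -1 < ν) (hη : 0 < η) (x : ℝ) :
    Summable (fun k : ℕ => d ν η k * x ^ (2*k)) := by
  apply summable_of_ratio_norm_eventually_le (r := 1/2) (by norm_num)
  filter_upwards [Filter.eventually_ge_atTop (⌈3*x^2⌉₊ + ⌈η⌉₊ + 1)] with k hk
  have hk3 : 3*x^2 ≤ (k:ℝ) := le_trans (Nat.le_ceil _) (by exact_mod_cast Nat.le_of_lt_succ (by omega))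
  have hkη : η ≤ (k:ℝ) := le_trans (Nat.le_ceil _) (by exact_mod_cast Nat.le_of_lt_succ (by omega))
  have hk1 : (1:ℝ) ≤ (k:ℝ) := by exact_mod_cast Nat.one_le_iff_ne_zero.mpr (by omega)
  have hνk : (0:ℝ) < ν + (k:ℝ) + 1 := by linarith
  have hrw : d ν η (k+1) * x ^ (2*(k+1))
      = (d ν η k * x ^ (2*k)) * (x^2 * ((η + 2*(k:ℝ)) / (4 * ((k:ℝ)+1) * (ν + (k:ℝ) + 1)))) := by
    rw [d_succ hν hη]; ring
  have ht0 : 0 ≤ x^2 * ((η + 2*(k:ℝ)) / (4 * ((k:ℝ)+1) * (ν + (k:ℝ) + 1))) := by positivity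
  have ht : x^2 * ((η + 2*(k:ℝ)) / (4 * ((k:ℝ)+1) * (ν + (k:ℝ) + 1))) ≤ 1/2 := by
    rw [mul_div_assoc', div_le_iff₀ (by positivity)]
    nlinarith [sq_nonneg x, mul_le_mul_of_nonneg_left hkη (sq_nonneg x)]
  calc ‖d ν η (k+1) * x ^ (2*(k+1))‖
      = ‖d ν η k * x ^ (2*k)‖ * ‖x^2 * ((η + 2*(k:ℝ)) / (4 * ((k:ℝ)+1) * (ν + (k:ℝ) + 1)))‖ := by
        rw [hrw, norm_mul]
    _ ≤ ‖d ν η k * x ^ (2*k)‖ * (1/2) := by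
        apply mul_le_mul_of_nonneg_left _ (norm_nonneg _)
        rw [Real.norm_of_nonneg ht0]; exact ht
    _ = 1/2 * ‖d ν η k * x ^ (2*k)‖ := by ring

lemma Ym_eq {ν η x : ℝ} (hν : -1 < ν) (hη : 0 < η) (hx : 0 < x) :
    Ym ν η x = Real.exp (-x^2/2) * ∑' k : ℕ, d ν η k * x ^ (2*k) := by
  classical
  set c : ℕ → ℝ := fun k => Real.exp (-x^2/2) *
    (2^(-ν) * x^(2*k) / (4^k * (Nat.factorial k : ℝ) * Real.Gamma (ν + (k:ℝ) + 1))) with hc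
  set F : ℕ → ℝ → ℝ := fun k z => c k * (z ^ (η - 1 + 2*(k:ℝ)) * Real.exp (-z^2/2)) with hF
  have hΓ : ∀ k : ℕ, 0 < Real.Gamma (ν + (k:ℝ) + 1) := fun k =>
    Real.Gamma_pos_of_pos (by have : (0:ℝ) ≤ k := Nat.cast_nonneg k; linarith)
  have hcpos : ∀ k, 0 < c k := fun k => by
    have := hΓ k
    rw [hc]; positivity
  -- step 1 : rewrite integrand as a tsum
  have h1 : Ym ν η x = ∫ z in Set.Ioi (0:ℝ), ∑' k : ℕ, F k z := by
    unfold Ym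
    refine setIntegral_congr_fun measurableSet_Ioi (fun z hz => ?_)
    have hz0 : (0:ℝ) < z := hz
    rw [Sminus_eq (by positivity : (0:ℝ) < x * z)]
    rw [show z ^ (η - 1) * (∑' k : ℕ, 2 ^ (-ν) *
        (((x*z)^2/4)^k / ((Nat.factorial k : ℝ) * Real.Gamma (ν + (k:ℝ) + 1)))) *
        Real.exp (-(z ^ 2 + x ^ 2) / 2)
      = (z ^ (η - 1) * Real.exp (-(z ^ 2 + x ^ 2) / 2)) * ∑' k : ℕ, 2 ^ (-ν) *
        (((x*z)^2/4)^k / ((Nat.factorial k : ℝ) * Real.Gamma (ν + (k:ℝ) + 1))) by ring,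
      ← tsum_mul_left]
    refine tsum_congr fun k => ?_
    have hzz : z ^ (η - 1 + 2*(k:ℝ)) = z ^ (η - 1) * z ^ (2*k) := by
      rw [Real.rpow_add hz0, ← Real.rpow_natCast z (2*k)]
      push_cast
      ring_nf
    have hee : Real.exp (-(z ^ 2 + x ^ 2) / 2) = Real.exp (-z^2/2) * Real.exp (-x^2/2) := by
      rw [← Real.exp_add]; congr 1; ring
    rw [hF, hc]
    simp only []
    rw [hzz, hee]
    have h4 : ((x*z)^2/4)^k = x^(2*k) * z^(2*k) / 4^k := by
      rw [div_pow, mul_pow, pow_mul, pow_mul, mul_pow]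
    rw [h4]
    ring
  -- integrability of each term
  have hint : ∀ k : ℕ, Integrable (F k) (volume.restrict (Set.Ioi (0:ℝ))) := by
    intro k
    have : IntegrableOn (fun z : ℝ => z ^ (η - 1 + 2*(k:ℝ)) * Real.exp (-(1/2) * z^2))
        (Set.Ioi 0) := integrableOn_rpow_mul_exp_neg_mul_sq (by norm_num) (by
          have : (0:ℝ) ≤ k := Nat.cast_nonneg k; linarith)
    have heq : (fun z : ℝ => c k * (z ^ (η - 1 + 2*(k:ℝ)) * Real.exp (-z^2/2)))
        = fun z : ℝ => c k * (z ^ (η - 1 + 2*(k:ℝ)) * Real.exp (-(1/2) * z^2)) := by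
      funext z; congr 2; ring
    have h2 : IntegrableOn (fun z : ℝ => c k * (z ^ (η - 1 + 2*(k:ℝ)) * Real.exp (-z^2/2)))
        (Set.Ioi 0) := by
      rw [heq]; exact this.const_mul (c k)
    exact h2
  -- value of each term
  have hval : ∀ k : ℕ, ∫ z in Set.Ioi (0:ℝ), F k z = Real.exp (-x^2/2) * (d ν η k * x ^ (2*k)) := by
    intro k
    have hm := moment (q := η - 1 + 2*(k:ℝ)) (by have : (0:ℝ) ≤ k := Nat.cast_nonneg k; linarith)
    rw [hF]
    simp only []
    rw [integral_const_mul, hm]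
    rw [show (η - 1 + 2*(k:ℝ) - 1)/2 = (η + 2*(k:ℝ) - 2)/2 by ring,
      show (η - 1 + 2*(k:ℝ) + 1)/2 = (η + 2*(k:ℝ))/2 by ring]
    rw [hc]
    unfold d
    ring
  -- norms
  have hnorm : ∀ k : ℕ, (∫ z in Set.Ioi (0:ℝ), ‖F k z‖)
      = Real.exp (-x^2/2) * (d ν η k * x ^ (2*k)) := by
    intro k
    rw [← hval k]
    refine setIntegral_congr_fun measurableSet_Ioi (fun z hz => ?_)
    have hz0 : (0:ℝ) < z := hz
    have : 0 ≤ F k z := by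
      rw [hF]; simp only []
      have := (hcpos k).le
      positivity
    exact Real.norm_of_nonneg this
  have hsum : Summable fun k : ℕ => ∫ z in Set.Ioi (0:ℝ), ‖F k z‖ := by
    refine Summable.congr (((summable_d hν hη x).mul_left (Real.exp (-x^2/2)))) fun k => ?_
    rw [hnorm k]
  rw [h1, ← MeasureTheory.integral_tsum_of_summable_integral_norm hint hsum]
  rw [← tsum_mul_left]
  exact tsum_congr fun k => hval k

lemma d_step {ν η : ℝ} (hν : -1 < ν) (hη : 0 < η) (k : ℕ) :
    d (ν+1) (η+2) k = d ν η k + (η - (2*ν+2)) * d ν η k / (2*(k:ℝ) + (2*ν+2)) := by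
  have hk : (0:ℝ) ≤ k := Nat.cast_nonneg k
  have hνk : (0:ℝ) < ν + (k:ℝ) + 1 := by linarith
  have hden : (0:ℝ) < 2*(k:ℝ) + (2*ν+2) := by linarith
  have hGp1 : 0 < Real.Gamma ((η + 2*(k:ℝ))/2) := Real.Gamma_pos_of_pos (by positivity)
  have hGp2 : 0 < Real.Gamma (ν + (k:ℝ) + 1) := Real.Gamma_pos_of_pos hνk
  have hstep2 : d ν η k + (η - (2*ν+2)) * d ν η k / (2*(k:ℝ) + (2*ν+2))
      = d ν η k * ((η + 2*(k:ℝ)) / (2 * (ν + (k:ℝ) + 1))) := by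
    rw [show (2*(k:ℝ) + (2*ν+2)) = 2 * (ν + (k:ℝ) + 1) by ring]
    have hne : (2 * (ν + (k:ℝ) + 1)) ≠ 0 := ne_of_gt (by linarith)
    rw [mul_div_assoc', eq_div_iff hne, add_mul, div_mul_cancel₀ _ hne]
    ring
  rw [hstep2]
  have hG1 : Real.Gamma ((η+2 + 2*(k:ℝ))/2) = ((η + 2*(k:ℝ))/2) * Real.Gamma ((η + 2*(k:ℝ))/2) := by
    rw [show (η+2 + 2*(k:ℝ))/2 = (η + 2*(k:ℝ))/2 + 1 by ring,
      Real.Gamma_add_one (by positivity)]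
  have hG2 : Real.Gamma (ν+1 + (k:ℝ) + 1) = (ν + (k:ℝ) + 1) * Real.Gamma (ν + (k:ℝ) + 1) := by
    rw [show ν+1 + (k:ℝ) + 1 = (ν + (k:ℝ) + 1) + 1 by ring,
      Real.Gamma_add_one (ne_of_gt hνk)]
  have hr1 : (2:ℝ) ^ (-(ν+1)) = 2 ^ (-ν) * 2⁻¹ := by
    rw [show -(ν+1) = -ν + (-1) by ring, Real.rpow_add (by norm_num), Real.rpow_neg_one]
  have hr2 : (2:ℝ) ^ ((η+2 + 2*(k:ℝ) - 2)/2) = 2 ^ ((η + 2*(k:ℝ) - 2)/2) * 2 := by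
    rw [show (η+2 + 2*(k:ℝ) - 2)/2 = (η + 2*(k:ℝ) - 2)/2 + 1 by ring,
      Real.rpow_add (by norm_num), Real.rpow_one]
  unfold d
  rw [hG1, hG2, hr1, hr2, div_mul_div_comm, div_eq_div_iff (by positivity) (by positivity)]
  ring

lemma key_int {ν η x p : ℝ} (hν : -1 < ν) (hη : 0 < η) (hx : 0 < x) (hp : 0 < p) :
    ∫ a in (0:ℝ)..x, Ym ν η a * a^(p - 1) * Real.exp (a^2/2)
      = ∑' k : ℕ, d ν η k * x^(2*(k:ℝ) + p) / (2*(k:ℝ) + p) := by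
  have hr : ∀ k : ℕ, (-1:ℝ) < 2*(k:ℝ) + p - 1 := fun k => by
    have : (0:ℝ) ≤ k := Nat.cast_nonneg k; linarith
  have hrp : ∀ k : ℕ, (0:ℝ) < 2*(k:ℝ) + p := fun k => by
    have : (0:ℝ) ≤ k := Nat.cast_nonneg k; linarith
  rw [intervalIntegral.integral_of_le hx.le]
  have step1 : ∀ a ∈ Set.Ioc (0:ℝ) x, Ym ν η a * a^(p - 1) * Real.exp (a^2/2)
      = ∑' k : ℕ, d ν η k * a^(2*(k:ℝ) + p - 1) := by
    intro a ha
    have ha0 : (0:ℝ) < a := ha.1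
    rw [Ym_eq hν hη ha0]
    have hcancel : Real.exp (-a^2/2) * Real.exp (a^2/2) = 1 := by
      rw [← Real.exp_add, show -a^2/2 + a^2/2 = 0 by ring, Real.exp_zero]
    rw [show Real.exp (-a^2/2) * (∑' k : ℕ, d ν η k * a ^ (2*k)) * a^(p-1) * Real.exp (a^2/2)
        = (∑' k : ℕ, d ν η k * a ^ (2*k)) * a^(p-1) * (Real.exp (-a^2/2) * Real.exp (a^2/2))
        by ring, hcancel, mul_one, ← tsum_mul_right]
    refine tsum_congr fun k => ?_
    rw [show (2*(k:ℝ) + p - 1) = ((2*k : ℕ):ℝ) + (p - 1) by push_cast; ring,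
      Real.rpow_add ha0, Real.rpow_natCast]
    ring
  rw [setIntegral_congr_fun measurableSet_Ioc step1]
  have hint : ∀ k : ℕ, Integrable (fun a : ℝ => d ν η k * a^(2*(k:ℝ) + p - 1))
      (volume.restrict (Set.Ioc (0:ℝ) x)) := by
    intro k
    have h := intervalIntegral.intervalIntegrable_rpow' (a := 0) (b := x) (hr k)
    rw [intervalIntegrable_iff_integrableOn_Ioc_of_le hx.le] at h
    exact h.const_mul _
  have hval : ∀ k : ℕ, ∫ a in Set.Ioc (0:ℝ) x, d ν η k * a^(2*(k:ℝ) + p - 1)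
      = d ν η k * x^(2*(k:ℝ) + p) / (2*(k:ℝ) + p) := by
    intro k
    rw [MeasureTheory.integral_const_mul, ← intervalIntegral.integral_of_le hx.le,
      integral_rpow (Or.inl (hr k)),
      Real.zero_rpow (by have := hrp k; intro hh; rw [show 2*(k:ℝ) + p - 1 + 1 = 2*(k:ℝ) + p by ring] at hh; linarith),
      show 2*(k:ℝ) + p - 1 + 1 = 2*(k:ℝ) + p by ring]
    ring
  have hnorm : ∀ k : ℕ, (∫ a in Set.Ioc (0:ℝ) x, ‖d ν η k * a^(2*(k:ℝ) + p - 1)‖)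
      = d ν η k * x^(2*(k:ℝ) + p) / (2*(k:ℝ) + p) := by
    intro k
    rw [← hval k]
    refine setIntegral_congr_fun measurableSet_Ioc (fun a ha => ?_)
    have ha0 : (0:ℝ) < a := ha.1
    have hd := (d_pos hν hη k).le
    exact Real.norm_of_nonneg (by positivity)
  have hsumval : Summable fun k : ℕ => d ν η k * x^(2*(k:ℝ) + p) / (2*(k:ℝ) + p) := by
    refine Summable.of_nonneg_of_le (fun k => ?_) (fun k => ?_)
      (((summable_d hν hη x).mul_right (x^p / p)))
    · have hd := (d_pos hν hη k).le
      have := (hrp k).le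
      positivity
    · have hxx : x^(2*(k:ℝ) + p) = x^(2*k) * x^p := by
        rw [show 2*(k:ℝ) + p = ((2*k : ℕ):ℝ) + p by push_cast; ring,
          Real.rpow_add hx, Real.rpow_natCast]
      rw [hxx]
      have hd := (d_pos hν hη k).le
      have h1 : (0:ℝ) ≤ d ν η k * x^(2*k) * x^p := by positivity
      rw [show d ν η k * (x^(2*k) * x^p) / (2*(k:ℝ) + p) = (d ν η k * x^(2*k) * x^p) / (2*(k:ℝ) + p) by ring,
        show d ν η k * x^(2*k) * (x^p / p) = (d ν η k * x^(2*k) * x^p) / p by ring]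
      exact div_le_div_of_nonneg_left h1 hp (by have : (0:ℝ) ≤ k := Nat.cast_nonneg k; linarith)
        |>.trans_eq rfl
  have hsum : Summable fun k : ℕ => ∫ a in Set.Ioc (0:ℝ) x, ‖d ν η k * a^(2*(k:ℝ) + p - 1)‖ := by
    refine Summable.congr hsumval fun k => ?_
    rw [hnorm k]
  rw [← MeasureTheory.integral_tsum_of_summable_integral_norm hint hsum]
  exact tsum_congr fun k => hval k

theorem stmt5 (n η : ℝ) (hn : n ∈ Set.Ioo (0:ℝ) 2) (hη : 0 < η) (x : ℝ) (hx : 0 < x) :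
    x * Ym ((n - 2) / 2 + 1) (η + 2) x
      = x * Ym ((n - 2) / 2) η x
        + (η - n) * x ^ (1 - n) * Real.exp (-x ^ 2 / 2)
          * ∫ a in (0:ℝ)..x, Ym ((n - 2) / 2) η a * a ^ (n - 1) * Real.exp (a ^ 2 / 2) := by
  obtain ⟨hn0, hn2⟩ := hn
  have hν : (-1:ℝ) < (n-2)/2 := by linarith
  have hν1 : (-1:ℝ) < (n-2)/2 + 1 := by linarith
  have hη2 : (0:ℝ) < η + 2 := by linarith
  rw [Ym_eq hν1 hη2 hx, Ym_eq hν hη hx, key_int hν hη hx hn0]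
  set E := Real.exp (-x^2/2) with hE
  set S := ∑' k : ℕ, d ((n-2)/2) η k * x ^ (2*k) with hS
  set T := ∑' k : ℕ, (η - n) * (d ((n-2)/2) η k / (2*(k:ℝ) + n)) * x ^ (2*k) with hT
  have hsum1 : Summable (fun k : ℕ => d ((n-2)/2) η k * x ^ (2*k)) := summable_d hν hη x
  have hdenpos : ∀ k : ℕ, (0:ℝ) < 2*(k:ℝ) + n := fun k => by
    have : (0:ℝ) ≤ k := Nat.cast_nonneg k; linarith
  have hsum2 : Summable (fun k : ℕ => (η - n) * (d ((n-2)/2) η k / (2*(k:ℝ) + n)) * x ^ (2*k)) := by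
    refine Summable.of_norm_bounded ((hsum1.mul_left (|η - n| / n))) fun k => ?_
    have hd := d_pos hν hη k
    have hdn := hdenpos k
    rw [Real.norm_eq_abs, abs_mul, abs_mul, abs_of_nonneg (by positivity : (0:ℝ) ≤ d ((n-2)/2) η k / (2*(k:ℝ) + n)),
      abs_of_nonneg (by positivity : (0:ℝ) ≤ x ^ (2*k))]
    rw [show |η - n| * (d ((n-2)/2) η k / (2*(k:ℝ) + n)) * x ^ (2*k)
        = (|η - n| * d ((n-2)/2) η k * x ^ (2*k)) / (2*(k:ℝ) + n) by ring,
      show |η - n| / n * (d ((n-2)/2) η k * x ^ (2*k))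
        = (|η - n| * d ((n-2)/2) η k * x ^ (2*k)) / n by ring]
    apply div_le_div_of_nonneg_left ?_ hn0 ?_
    · positivity
    · have : (0:ℝ) ≤ k := Nat.cast_nonneg k; linarith
  have hterm : ∀ k : ℕ, d ((n-2)/2 + 1) (η+2) k * x ^ (2*k)
      = d ((n-2)/2) η k * x ^ (2*k)
        + (η - n) * (d ((n-2)/2) η k / (2*(k:ℝ) + n)) * x ^ (2*k) := by
    intro k
    have h := d_step hν hη k
    rw [show 2*((n-2)/2) + 2 = n by ring] at h
    rw [h]
    ring
  have hcalc : (∑' k : ℕ, d ((n-2)/2 + 1) (η+2) k * x ^ (2*k)) = S + T := by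
    rw [hS, hT, ← Summable.tsum_add hsum1 hsum2]
    exact tsum_congr hterm
  have hxpow : ∀ k : ℕ, x ^ (1-n) * x ^ (2*(k:ℝ) + n) = x * x ^ (2*k) := by
    intro k
    rw [← Real.rpow_add hx, show (1-n) + (2*(k:ℝ) + n) = ((2*k+1 : ℕ):ℝ) by push_cast; ring,
      Real.rpow_natCast, pow_succ]
    ring
  have hTeq : (η - n) * x ^ (1-n) * E
        * (∑' k : ℕ, d ((n-2)/2) η k * x ^ (2*(k:ℝ) + n) / (2*(k:ℝ) + n))
      = x * E * T := by
    rw [hT, ← tsum_mul_left, ← tsum_mul_left]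
    refine tsum_congr fun k => ?_
    rw [show (η - n) * x ^ (1-n) * E * (d ((n-2)/2) η k * x ^ (2*(k:ℝ) + n) / (2*(k:ℝ) + n))
        = E * ((η - n) * d ((n-2)/2) η k / (2*(k:ℝ) + n)) * (x ^ (1-n) * x ^ (2*(k:ℝ) + n)) by ring,
      hxpow k]
    ring
  rw [hcalc, hTeq]
  ring
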